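/- Let Γ₀ := {z ∈ ℝ^d : 0 < ‖z‖ < 1}. Let κ : Γ₀ → (0,∞) be twice continuously differentiable satisfying ‖∇ log κ(z)‖ ≤ C₁ ‖z‖^{−1} and ‖∇² log κ(z)‖ ≤ C₂ ‖z‖^{−2} for all z ∈ Γ₀, and let ζ : ℝ^d → [0,∞) be twice continuously differentiable with ζ(z) = ‖z‖³ for ‖z‖ ≤ 1/4 and ζ(z) = 0 for ‖z‖ > 1/2. Define η : Γ₀ → ℝ^d by η(z) := ∇ζ(z) + ζ(z) ∇ log κ(z). Then there exists a constant C > 0 such that ‖∇η(z)‖ · ζ(z) ≤ C ‖z‖⁴ for all z ∈ Γ₀, where ∇η(z) denotes the Jacobian matrix of η at z. -/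

import Mathlib

open Set InnerProductSpace

set_option linter.unusedSectionVars false

section aux
variable {E : Type*} [NormedAddCommGroup E] [InnerProductSpace ℝ E] [CompleteSpace E]

lemma hasFDerivAt_norm_ne_zero {x : E} (hx : x ≠ 0) :
    HasFDerivAt (fun y : E => ‖y‖) (‖x‖⁻¹ • innerSL ℝ x) x := by
  have hx' : (0:ℝ) < ‖x‖ := norm_pos_iff.mpr hx
  have hsq : HasFDerivAt (fun y : E => ‖y‖ ^ 2) ((2:ℕ) • innerSL ℝ x) x :=
    (hasStrictFDerivAt_norm_sq x).hasFDerivAt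
  have h := hsq.sqrt (by positivity)
  have hfun : (fun y : E => Real.sqrt (‖y‖ ^ 2)) = fun y : E => ‖y‖ := by
    funext y; rw [Real.sqrt_sq (norm_nonneg y)]
  rw [hfun] at h
  convert h using 1
  refine ContinuousLinearMap.ext fun y => ?_
  simp [Real.sqrt_sq hx'.le]
  field_simp

lemma hasFDerivAt_norm_cube {x : E} (hx : x ≠ 0) :
    HasFDerivAt (fun y : E => ‖y‖ ^ 3) ((3 * ‖x‖) • innerSL ℝ x) x := by
  have hx' : (0:ℝ) < ‖x‖ := norm_pos_iff.mpr hx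
  have h := (hasDerivAt_pow 3 ‖x‖).comp_hasFDerivAt x (hasFDerivAt_norm_ne_zero hx)
  convert h using 1
  iterate 3 rfl
  rw [smul_smul]
  congr 1
  push_cast
  field_simp

lemma hasGradientAt_norm_cube {x : E} (hx : x ≠ 0) :
    HasGradientAt (fun y : E => ‖y‖ ^ 3) ((3 * ‖x‖) • x) x := by
  have h := hasFDerivAt_norm_cube hx
  rw [hasGradientAt_iff_hasFDerivAt]
  convert h using 1
  rfl
  refine ContinuousLinearMap.ext fun y => ?_
  simp [toDual_apply_apply, real_inner_smul_left]

lemma norm_gradient_eq (f : E → ℝ) (x : E) : ‖gradient f x‖ = ‖fderiv ℝ f x‖ := by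
  rw [gradient]
  exact LinearIsometryEquiv.norm_map _ _

lemma contDiff_one_gradient {f : E → ℝ} (hf : ContDiff ℝ 2 f) :
    ContDiff ℝ 1 (gradient f) := by
  have h1 : ContDiff ℝ 1 (fderiv ℝ f) := hf.fderiv_right (by norm_num)
  have h2 : ContDiff ℝ 1 (fun p : StrongDual ℝ E => (toDual ℝ E).symm p) :=
    (toDual ℝ E).symm.toContinuousLinearEquiv.toContinuousLinearMap.contDiff
  exact h2.comp h1

lemma differentiableAt_gradient_of_contDiffAt {f : E → ℝ} {x : E}
    (hf : ContDiffAt ℝ 2 f x) : DifferentiableAt ℝ (gradient f) x := by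
  have h1 : ContDiffAt ℝ 1 (fderiv ℝ f) x := hf.fderiv_right (by norm_num)
  have h2 : DifferentiableAt ℝ (fun p : StrongDual ℝ E => (toDual ℝ E).symm p)
      (fderiv ℝ f x) :=
    ((toDual ℝ E).symm.toContinuousLinearEquiv.toContinuousLinearMap.differentiableAt)
  exact h2.comp x (h1.differentiableAt (by norm_num))


end aux

set_option maxHeartbeats 1000000 in
theorem eta_jacobian_bound (d : ℕ)
    (κ : EuclideanSpace ℝ (Fin d) → ℝ) (C₁ C₂ : ℝ) (hC₁ : 0 < C₁) (hC₂ : 0 < C₂)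
    (hκ : ContDiffOn ℝ 2 κ {z : EuclideanSpace ℝ (Fin d) | 0 < ‖z‖ ∧ ‖z‖ < 1})
    (hκpos : ∀ z ∈ {z : EuclideanSpace ℝ (Fin d) | 0 < ‖z‖ ∧ ‖z‖ < 1}, 0 < κ z)
    (hκgrad : ∀ z ∈ {z : EuclideanSpace ℝ (Fin d) | 0 < ‖z‖ ∧ ‖z‖ < 1},
      ‖gradient (fun w => Real.log (κ w)) z‖ ≤ C₁ / ‖z‖)
    (hκhess : ∀ z ∈ {z : EuclideanSpace ℝ (Fin d) | 0 < ‖z‖ ∧ ‖z‖ < 1},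
      ‖fderiv ℝ (fun w => gradient (fun u => Real.log (κ u)) w) z‖ ≤ C₂ / ‖z‖ ^ 2)
    (ζ : EuclideanSpace ℝ (Fin d) → ℝ) (hζ : ContDiff ℝ 2 ζ) (hζnn : ∀ z, 0 ≤ ζ z)
    (hζeq : ∀ z : EuclideanSpace ℝ (Fin d), ‖z‖ ≤ 1 / 4 → ζ z = ‖z‖ ^ 3)
    (hζ0 : ∀ z : EuclideanSpace ℝ (Fin d), 1 / 2 < ‖z‖ → ζ z = 0) :
    ∃ C > (0 : ℝ), ∀ z ∈ {z : EuclideanSpace ℝ (Fin d) | 0 < ‖z‖ ∧ ‖z‖ < 1},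
      ‖fderiv ℝ
          (fun w => gradient ζ w + ζ w • gradient (fun u => Real.log (κ u)) w) z‖
        * ζ z ≤ C * ‖z‖ ^ 4 := by
  classical
  have hs_open : IsOpen {z : EuclideanSpace ℝ (Fin d) | 0 < ‖z‖ ∧ ‖z‖ < 1} :=
    (isOpen_lt continuous_const continuous_norm).and (isOpen_lt continuous_norm continuous_const)
  set G : EuclideanSpace ℝ (Fin d) → EuclideanSpace ℝ (Fin d) := fun w => gradient (fun u => Real.log (κ u)) w with hG_def
  -- compact bounds for ζ and its derivatives on the closed ball of radius 1/2
  have hK : IsCompact (Metric.closedBall (0:EuclideanSpace ℝ (Fin d)) (1/2)) := isCompact_closedBall _ _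
  obtain ⟨M₀, hM₀⟩ := hK.exists_bound_of_continuousOn hζ.continuous.continuousOn
  obtain ⟨M₁, hM₁⟩ := hK.exists_bound_of_continuousOn
    ((hζ.continuous_fderiv (by norm_num)).continuousOn)
  have hgradζ : ContDiff ℝ 1 (gradient ζ) := contDiff_one_gradient hζ
  obtain ⟨M₂, hM₂⟩ := hK.exists_bound_of_continuousOn
    ((hgradζ.continuous_fderiv (by norm_num)).continuousOn)
  set N₀ : ℝ := max M₀ 0 with hN₀
  set N₁ : ℝ := max M₁ 0 with hN₁
  set N₂ : ℝ := max M₂ 0 with hN₂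
  have hN₀nn : 0 ≤ N₀ := le_max_right _ _
  have hN₁nn : 0 ≤ N₁ := le_max_right _ _
  have hN₂nn : 0 ≤ N₂ := le_max_right _ _
  set A : ℝ := 6 + 3 * C₁ + C₂ with hA
  set B : ℝ := 256 * N₀ * (N₂ + 4 * C₁ * N₁ + 16 * C₂ * N₀) with hB
  have hApos : 0 < A := by positivity
  have hBnn : 0 ≤ B := by positivity
  refine ⟨A + B, by positivity, ?_⟩
  intro z hz
  obtain ⟨hz0, hz1⟩ := hz
  have hzne : z ≠ 0 := norm_pos_iff.mp hz0
  by_cases hzhalf : 1/2 < ‖z‖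
  · rw [hζ0 z hzhalf, mul_zero]
    positivity
  push_neg at hzhalf
  -- differentiability facts at z
  have hzs : z ∈ {z : EuclideanSpace ℝ (Fin d) | 0 < ‖z‖ ∧ ‖z‖ < 1} := ⟨hz0, hz1⟩
  have hlog : ContDiffOn ℝ 2 (fun w => Real.log (κ w)) {z : EuclideanSpace ℝ (Fin d) | 0 < ‖z‖ ∧ ‖z‖ < 1} :=
    hκ.log (fun x hx => (hκpos x hx).ne')
  have hlogAt : ContDiffAt ℝ 2 (fun w => Real.log (κ w)) z :=
    hlog.contDiffAt (hs_open.mem_nhds hzs)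
  have hGdiff : DifferentiableAt ℝ G z :=
    differentiableAt_gradient_of_contDiffAt hlogAt
  have hζd : DifferentiableAt ℝ ζ z := hζ.differentiable (by norm_num) z
  have hgd : DifferentiableAt ℝ (gradient ζ) z := hgradζ.differentiable (by norm_num) z
  have key : fderiv ℝ (fun w => gradient ζ w + ζ w • G w) z
      = fderiv ℝ (gradient ζ) z
        + (ζ z • fderiv ℝ G z + (fderiv ℝ ζ z).smulRight (G z)) := by
    rw [fderiv_fun_add hgd (hζd.fun_smul hGdiff), fderiv_fun_smul hζd hGdiff]
  have hnorm_le : ‖fderiv ℝ (fun w => gradient ζ w + ζ w • G w) z‖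
      ≤ ‖fderiv ℝ (gradient ζ) z‖ + ζ z * ‖fderiv ℝ G z‖ + ‖fderiv ℝ ζ z‖ * ‖G z‖ := by
    rw [key]
    have e1 : ‖ζ z • fderiv ℝ G z‖ = ζ z * ‖fderiv ℝ G z‖ := by
      rw [norm_smul, Real.norm_eq_abs, abs_of_nonneg (hζnn z)]
    have e2 : ‖(fderiv ℝ ζ z).smulRight (G z)‖ = ‖fderiv ℝ ζ z‖ * ‖G z‖ :=
      ContinuousLinearMap.norm_smulRight_apply _ _
    have h4 := norm_add_le (fderiv ℝ (gradient ζ) z)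
      (ζ z • fderiv ℝ G z + (fderiv ℝ ζ z).smulRight (G z))
    have h5 := norm_add_le (ζ z • fderiv ℝ G z) ((fderiv ℝ ζ z).smulRight (G z))
    rw [e1, e2] at h5
    linarith
  have hGz : ‖G z‖ ≤ C₁ / ‖z‖ := hκgrad z hzs
  have hG'z : ‖fderiv ℝ G z‖ ≤ C₂ / ‖z‖ ^ 2 := hκhess z hzs
  by_cases hz4 : ‖z‖ < 1/4
  · -- near the origin: use explicit formulas
    set U : Set (EuclideanSpace ℝ (Fin d)) := {w : EuclideanSpace ℝ (Fin d) | 0 < ‖w‖ ∧ ‖w‖ < 1/4} with hU_def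
    have hU_open : IsOpen U :=
      (isOpen_lt continuous_const continuous_norm).and (isOpen_lt continuous_norm continuous_const)
    have hzU : z ∈ U := ⟨hz0, hz4⟩
    have hgr : ∀ w ∈ U, gradient ζ w = (3 * ‖w‖) • w := by
      intro w hw
      have hwne : w ≠ 0 := norm_pos_iff.mp hw.1
      have hev : ζ =ᶠ[nhds w] fun v : EuclideanSpace ℝ (Fin d) => ‖v‖ ^ 3 := by
        have hmem : {v : EuclideanSpace ℝ (Fin d) | ‖v‖ < 1/4} ∈ nhds w :=
          ((isOpen_lt continuous_norm continuous_const)).mem_nhds hw.2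
        filter_upwards [hmem] with v hv
        exact hζeq v (le_of_lt hv)
      rw [hev.gradient_eq, (hasGradientAt_norm_cube hwne).gradient]
    have hζz : ζ z = ‖z‖ ^ 3 := hζeq z (le_of_lt hz4)
    have hfζ : ‖fderiv ℝ ζ z‖ = 3 * ‖z‖ ^ 2 := by
      rw [← norm_gradient_eq, hgr z hzU, norm_smul, Real.norm_eq_abs,
        abs_of_nonneg (by positivity)]
      ring
    -- Hessian bound
    have hev2 : gradient ζ =ᶠ[nhds z] fun w : EuclideanSpace ℝ (Fin d) => (3 * ‖w‖) • w := by
      filter_upwards [hU_open.mem_nhds hzU] with w hw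
      exact hgr w hw
    have hc : HasFDerivAt (fun w : EuclideanSpace ℝ (Fin d) => 3 * ‖w‖) ((3:ℝ) • (‖z‖⁻¹ • innerSL ℝ z)) z :=
      (hasFDerivAt_norm_ne_zero hzne).const_mul 3
    have hD : HasFDerivAt (fun w : EuclideanSpace ℝ (Fin d) => (3 * ‖w‖) • w)
        ((3 * ‖z‖) • ContinuousLinearMap.id ℝ (EuclideanSpace ℝ (Fin d))
          + ((3:ℝ) • (‖z‖⁻¹ • innerSL ℝ z)).smulRight z) z :=
      hc.smul (hasFDerivAt_id z)
    have hhess : ‖fderiv ℝ (gradient ζ) z‖ ≤ 6 * ‖z‖ := by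
      rw [hev2.fderiv_eq, hD.fderiv]
      refine ContinuousLinearMap.opNorm_le_bound _ (by positivity) fun v => ?_
      have happ : ((3 * ‖z‖) • ContinuousLinearMap.id ℝ (EuclideanSpace ℝ (Fin d))
            + ((3:ℝ) • (‖z‖⁻¹ • innerSL ℝ z)).smulRight z) v
          = (3 * ‖z‖) • v + ((3:ℝ) * (‖z‖⁻¹ * (inner ℝ z v : ℝ))) • z := by
        simp [ContinuousLinearMap.smulRight_apply, ContinuousLinearMap.add_apply,
          ContinuousLinearMap.smul_apply, mul_smul]
      rw [happ]
      have hCS : |(inner ℝ z v : ℝ)| ≤ ‖z‖ * ‖v‖ := abs_real_inner_le_norm z v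
      have hinv : ‖z‖⁻¹ * ‖z‖ = 1 := inv_mul_cancel₀ hz0.ne'
      have hb : ‖((3:ℝ) * (‖z‖⁻¹ * (inner ℝ z v : ℝ))) • z‖ ≤ 3 * ‖z‖ * ‖v‖ := by
        rw [norm_smul, Real.norm_eq_abs, abs_mul, abs_mul,
          abs_of_nonneg (by norm_num : (0:ℝ) ≤ 3),
          abs_of_nonneg (inv_nonneg.mpr (norm_nonneg z))]
        have h3 : 3 * (‖z‖⁻¹ * |(inner ℝ z v : ℝ)|) * ‖z‖ = 3 * |(inner ℝ z v : ℝ)| * (‖z‖⁻¹ * ‖z‖) := by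
          ring
        rw [h3, hinv, mul_one]
        nlinarith
      have ha : ‖(3 * ‖z‖) • v‖ = 3 * ‖z‖ * ‖v‖ := by
        rw [norm_smul, Real.norm_eq_abs, abs_of_nonneg (by positivity : (0:ℝ) ≤ 3 * ‖z‖)]
      calc ‖(3 * ‖z‖) • v + ((3:ℝ) * (‖z‖⁻¹ * (inner ℝ z v : ℝ))) • z‖
          ≤ ‖(3 * ‖z‖) • v‖ + ‖((3:ℝ) * (‖z‖⁻¹ * (inner ℝ z v : ℝ))) • z‖ := norm_add_le _ _
        _ ≤ 3 * ‖z‖ * ‖v‖ + 3 * ‖z‖ * ‖v‖ := by rw [ha]; linarith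
        _ = 6 * ‖z‖ * ‖v‖ := by ring
    -- combine
    have hz0' : (‖z‖:ℝ) ≠ 0 := hz0.ne'
    have ha1 : ‖z‖ ^ 3 * (C₂ / ‖z‖ ^ 2) = C₂ * ‖z‖ := by
      field_simp
    have ha2 : (3 * ‖z‖ ^ 2) * (C₁ / ‖z‖) = 3 * C₁ * ‖z‖ := by
      field_simp
    have hL : ‖fderiv ℝ (fun w => gradient ζ w + ζ w • G w) z‖ ≤ A * ‖z‖ := by
      refine le_trans hnorm_le ?_
      have t1 : ζ z * ‖fderiv ℝ G z‖ ≤ C₂ * ‖z‖ := by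
        rw [← ha1, hζz]
        exact mul_le_mul_of_nonneg_left hG'z (by positivity)
      have t2 : ‖fderiv ℝ ζ z‖ * ‖G z‖ ≤ 3 * C₁ * ‖z‖ := by
        rw [← ha2, hfζ]
        exact mul_le_mul_of_nonneg_left hGz (by positivity)
      rw [hA]
      linarith
    have hstep : ‖fderiv ℝ (fun w => gradient ζ w + ζ w • G w) z‖ * ζ z
        ≤ (A * ‖z‖) * ‖z‖ ^ 3 := by
      rw [hζz]
      exact mul_le_mul hL le_rfl (by positivity) (by positivity)
    have : (A * ‖z‖) * ‖z‖ ^ 3 = A * ‖z‖ ^ 4 := by ring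
    rw [this] at hstep
    refine le_trans hstep ?_
    have := pow_nonneg (norm_nonneg z) 4
    nlinarith
  · -- away from origin: compact bounds
    push_neg at hz4
    have hzball : z ∈ Metric.closedBall (0:EuclideanSpace ℝ (Fin d)) (1/2) := by
      simpa [Metric.mem_closedBall, dist_zero_right] using hzhalf
    have hb0 : ζ z ≤ N₀ := le_trans (le_trans (le_abs_self _) (hM₀ z hzball)) (le_max_left _ _)
    have hb1 : ‖fderiv ℝ ζ z‖ ≤ N₁ := le_trans (hM₁ z hzball) (le_max_left _ _)
    have hb2 : ‖fderiv ℝ (gradient ζ) z‖ ≤ N₂ := le_trans (hM₂ z hzball) (le_max_left _ _)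
    have hGz' : ‖G z‖ ≤ 4 * C₁ := by
      refine le_trans hGz ?_
      rw [div_le_iff₀ hz0]
      nlinarith [mul_nonneg hC₁.le (by linarith : (0:ℝ) ≤ ‖z‖ - 1/4)]
    have hG'z' : ‖fderiv ℝ G z‖ ≤ 16 * C₂ := by
      refine le_trans hG'z ?_
      rw [div_le_iff₀ (by positivity)]
      have hsq : (1/16:ℝ) ≤ ‖z‖ ^ 2 := by nlinarith
      nlinarith [mul_nonneg hC₂.le (by linarith : (0:ℝ) ≤ ‖z‖ ^ 2 - 1/16)]
    have hz4' : (1:ℝ) ≤ 256 * ‖z‖ ^ 4 := by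
      have h44 : (1:ℝ) ≤ 4 * ‖z‖ := by linarith
      have := one_le_pow₀ (n := 4) h44
      nlinarith [this]
    have hL : ‖fderiv ℝ (fun w => gradient ζ w + ζ w • G w) z‖
        ≤ N₂ + N₀ * (16 * C₂) + N₁ * (4 * C₁) := by
      refine le_trans hnorm_le ?_
      have t1 : ζ z * ‖fderiv ℝ G z‖ ≤ N₀ * (16 * C₂) :=
        mul_le_mul hb0 hG'z' (norm_nonneg _) hN₀nn
      have t2 : ‖fderiv ℝ ζ z‖ * ‖G z‖ ≤ N₁ * (4 * C₁) :=
        mul_le_mul hb1 hGz' (norm_nonneg _) hN₁nn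
      linarith
    have hsum_nn : 0 ≤ N₂ + N₀ * (16 * C₂) + N₁ * (4 * C₁) := by
      have h1 : 0 ≤ N₀ * (16 * C₂) := mul_nonneg hN₀nn (by linarith)
      have h2 : 0 ≤ N₁ * (4 * C₁) := mul_nonneg hN₁nn (by linarith)
      linarith
    have hstep : ‖fderiv ℝ (fun w => gradient ζ w + ζ w • G w) z‖ * ζ z
        ≤ (N₂ + N₀ * (16 * C₂) + N₁ * (4 * C₁)) * N₀ :=
      mul_le_mul hL hb0 (hζnn z) hsum_nn
    have hstep2 : (N₂ + N₀ * (16 * C₂) + N₁ * (4 * C₁)) * N₀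
        ≤ (N₂ + N₀ * (16 * C₂) + N₁ * (4 * C₁)) * N₀ * (256 * ‖z‖ ^ 4) :=
      le_mul_of_one_le_right (mul_nonneg hsum_nn hN₀nn) hz4'
    have hBeq : (N₂ + N₀ * (16 * C₂) + N₁ * (4 * C₁)) * N₀ * (256 * ‖z‖ ^ 4)
        = B * ‖z‖ ^ 4 := by rw [hB]; ring
    have := pow_nonneg (norm_nonneg z) 4
    nlinarith
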